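/- Let (U, —) be a finite loopless graph and let k be the length of its shortest odd cycle (U non-bipartite). Then the graph (U, —^{k-2}), where —^{k-2} is the (k−2)-fold composition of the symmetric relation —, is non-bipartite, loopless, and contains a triangle (three pairwise adjacent vertices). -/
import Mathlib


/-- `k`-fold relational composition (with `relPow r 0 = Eq`). -/
def relPow {A : Type*} (r : A → A → Prop) : ℕ → A → A → Prop
  | 0 => Eq
  | n + 1 => fun x z => ∃ y, r x y ∧ relPow r n y z

lemma relPow_append {A : Type*} {r : A → A → Prop} {n : ℕ} {x y z : A}
    (h : relPow r n x y) (hyz : r y z) : relPow r (n + 1) x z := by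
  induction n generalizing x with
  | zero => exact h ▸ ⟨z, hyz, rfl⟩
  | succ n ih =>
    obtain ⟨a, hxa, ha⟩ := h
    exact ⟨a, hxa, ih ha⟩

lemma relPow_symm {A : Type*} {r : A → A → Prop} (hs : Symmetric r) {n : ℕ} {x y : A}
    (h : relPow r n x y) : relPow r n y x := by
  induction n generalizing x y with
  | zero => exact h.symm
  | succ n ih =>
    obtain ⟨a, hxa, ha⟩ := h
    exact relPow_append (ih ha) (hs hxa)

lemma relPow_pad {A : Type*} {r : A → A → Prop} (hs : Symmetric r) {x y : A}
    (hxy : r x y) : ∀ t : ℕ, relPow r (2 * t + 1) x y := by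
  intro t
  induction t with
  | zero => exact ⟨y, hxy, rfl⟩
  | succ t ih =>
    have : relPow r (2 * t + 1 + 2) x y := ⟨y, hxy, x, hs hxy, ih⟩
    have e : 2 * (t + 1) + 1 = 2 * t + 1 + 2 := by ring
    rwa [e]

/-- If `k` is the length of a shortest odd cycle of a finite loopless graph,
then the `(k-2)`-fold composition of the edge relation is loopless,
non-bipartite, and contains a triangle. -/
theorem stmt19 {U : Type*} [Fintype U] (adj : U → U → Prop)
    (hsym : Symmetric adj) (hloop : ∀ u, ¬ adj u u)
    (k : ℕ) (hodd : Odd k)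
    (hcyc : ∃ u, relPow adj k u u)
    (hmin : ∀ m, Odd m → (∃ u, relPow adj m u u) → k ≤ m) :
    (∀ u, ¬ relPow adj (k - 2) u u) ∧
      (¬ ∃ f : U → Bool, ∀ a b, relPow adj (k - 2) a b → f a ≠ f b) ∧
      (∃ a b c : U, a ≠ b ∧ a ≠ c ∧ b ≠ c ∧
        relPow adj (k - 2) a b ∧ relPow adj (k - 2) b c ∧
        relPow adj (k - 2) a c) := by
  obtain ⟨u, hu⟩ := hcyc
  -- k ≠ 1
  have hk1 : k ≠ 1 := by
    rintro rfl
    obtain ⟨y, hxy, rfl⟩ := hu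
    exact hloop _ hxy
  have hk3 : 3 ≤ k := by
    obtain ⟨m, hm⟩ := hodd
    omega
  have hodd' : Odd (k - 2) := by
    obtain ⟨m, hm⟩ := hodd
    exact ⟨m - 1, by omega⟩
  -- looplessness of relPow (k-2)
  have hll : ∀ u, ¬ relPow adj (k - 2) u u := by
    intro v hv
    have := hmin (k - 2) hodd' ⟨v, hv⟩
    omega
  -- decompose the closed walk
  have hu' : relPow adj (k - 2 + 2) u u := by
    have e : k - 2 + 2 = k := by omega
    rwa [e]
  obtain ⟨x1, hux1, x2, hx12, hx2u⟩ := hu'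
  -- triangle edges
  obtain ⟨t, ht⟩ : ∃ t, k - 2 = 2 * t + 1 := by
    obtain ⟨m, hm⟩ := hodd'
    exact ⟨m, by omega⟩
  have e1 : relPow adj (k - 2) u x1 := by rw [ht]; exact relPow_pad hsym hux1 t
  have e2 : relPow adj (k - 2) x1 x2 := by rw [ht]; exact relPow_pad hsym hx12 t
  have e3 : relPow adj (k - 2) u x2 := relPow_symm hsym hx2u
  have d1 : u ≠ x1 := fun h => hloop u (h ▸ hux1)
  have d2 : x1 ≠ x2 := fun h => hloop x1 (h ▸ hx12)
  have d3 : u ≠ x2 := fun h => hll x2 (h ▸ e3)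
  refine ⟨hll, ?_, u, x1, x2, d1, d3, d2, e1, e2, e3⟩
  rintro ⟨f, hf⟩
  have h1 := hf _ _ e1
  have h2 := hf _ _ e2
  have h3 := hf _ _ e3
  revert h1 h2 h3
  cases f u <;> cases f x1 <;> cases f x2 <;> simp
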